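/- In the torus example X = 𝕋 ∪ H, for every surjective isometry g_ℝ of the Euclidean line ℝ there exists exactly one surjective isometry φ of (X, d) such that for every t ∈ ℝ the image φ(g(t), t) belongs to 𝕋 × {g_ℝ(t)} (equivalently, φ(g(t), t) = (g(g_ℝ(t)), g_ℝ(t))). -/

import Mathlib

/-- The distance of the Z-construction on the disjoint union `Y ⊕ (Y × ℝ)`. -/
noncomputable def zdist {Y : Type*} [MetricSpace Y] (R M : ℝ) :
    Y ⊕ Y × ℝ → Y ⊕ Y × ℝ → ℝ
  | Sum.inl y₁, Sum.inl y₂ => dist y₁ y₂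
  | Sum.inl y₁, Sum.inr q => dist y₁ q.1 + R
  | Sum.inr p, Sum.inl y₂ => dist p.1 y₂ + R
  | Sum.inr p, Sum.inr q => dist p.1 q.1 + min |p.2 - q.2| M

/-- The 2-torus `𝕋 = AddCircle 1 × AddCircle 1` with the product (max) metric. -/
abbrev T2 : Type := AddCircle (1 : ℝ) × AddCircle (1 : ℝ)

/-- The dense one-parameter subgroup `g(t) = (t mod 1, αt mod 1)` of the torus. -/
noncomputable def torusFlow (α : ℝ) (t : ℝ) : T2 :=
  ((t : AddCircle (1 : ℝ)), ((α * t : ℝ) : AddCircle (1 : ℝ)))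

/-- The space `X = 𝕋 ∪ H` where `H = {(g(t), t) : t ∈ ℝ}`, as a subset of
`Z = 𝕋 ⊕ (𝕋 × ℝ)`. -/
def torusX (α : ℝ) : Set (T2 ⊕ T2 × ℝ) :=
  {z | ∃ y : T2, z = Sum.inl y} ∪ {z | ∃ t : ℝ, z = Sum.inr (torusFlow α t, t)}

theorem memT (α : ℝ) (y : T2) : (Sum.inl y : T2 ⊕ T2 × ℝ) ∈ torusX α :=
  Or.inl ⟨y, rfl⟩

theorem memH (α : ℝ) (t : ℝ) :
    (Sum.inr (torusFlow α t, t) : T2 ⊕ T2 × ℝ) ∈ torusX α :=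
  Or.inr ⟨t, rfl⟩


lemma denseSubgroup (α : ℝ) (hα : Irrational α) :
    Dense ((AddSubgroup.closure ({1, α} : Set ℝ) : AddSubgroup ℝ) : Set ℝ) := by
  rcases AddSubgroup.dense_or_cyclic (AddSubgroup.closure {1, α}) with h | ⟨a, ha⟩
  · exact h
  · exfalso
    have h1 : (1 : ℝ) ∈ AddSubgroup.closure ({1, α} : Set ℝ) :=
      AddSubgroup.subset_closure (by simp)
    have h2 : α ∈ AddSubgroup.closure ({1, α} : Set ℝ) :=
      AddSubgroup.subset_closure (by simp)
    rw [ha, AddSubgroup.mem_closure_singleton] at h1 h2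
    obtain ⟨n, hn⟩ := h1
    obtain ⟨m, hm⟩ := h2
    rw [zsmul_eq_mul] at hn hm
    have hn0 : (n : ℝ) ≠ 0 := by
      intro h; rw [h, zero_mul] at hn; exact one_ne_zero hn.symm
    refine hα ⟨(m : ℚ) / (n : ℚ), ?_⟩
    have ha' : a = 1 / (n:ℝ) := eq_one_div_of_mul_eq_one_left (by linarith [hn] : a * (n:ℝ) = 1)
    have : α = (m : ℝ) / (n : ℝ) := by rw [← hm, ha']; ring
    rw [this]; push_cast; ring

lemma intCast_addCircle (n : ℤ) : ((n : ℝ) : AddCircle (1 : ℝ)) = 0 :=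
  (QuotientAddGroup.eq_zero_iff _).mpr (AddSubgroup.mem_zmultiples_iff.mpr ⟨n, by simp⟩)

lemma denseRange_torusFlow (α : ℝ) (hα : Irrational α) : DenseRange (torusFlow α) := by
  rw [Metric.denseRange_iff]
  intro z r hr
  obtain ⟨x, hx⟩ := Quotient.exists_rep z.1
  obtain ⟨y, hy⟩ := Quotient.exists_rep z.2
  obtain ⟨s, hs1, hs2⟩ := (denseSubgroup α hα).exists_dist_lt (y - α * x) hr
  obtain ⟨m, n, hmn⟩ := AddSubgroup.mem_closure_pair.mp hs1
  rw [zsmul_eq_mul, zsmul_eq_mul, mul_one] at hmn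
  refine ⟨x + n, ?_⟩
  have hfst : z.1 = ((x + n : ℝ) : AddCircle (1:ℝ)) := by
    rw [← hx]
    show _ = ((x : ℝ) : AddCircle (1:ℝ)) + ((n : ℝ) : AddCircle (1:ℝ))
    rw [intCast_addCircle, add_zero]
  have hsnd : dist z.2 (((α * (x + n) : ℝ)) : AddCircle (1:ℝ)) < r := by
    rw [← hy]
    have heq : ((y : ℝ) : AddCircle (1:ℝ)) - ((α * (x + n) : ℝ) : AddCircle (1:ℝ))
        = ((y - α * (x + n) - m : ℝ) : AddCircle (1:ℝ)) := by
      have : ((y - α * (x + n) - m : ℝ) : AddCircle (1:ℝ))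
          = ((y - α * (x + n) : ℝ) : AddCircle (1:ℝ)) - ((m : ℝ) : AddCircle (1:ℝ)) := by
        push_cast; rfl
      rw [this, intCast_addCircle, sub_zero]
      push_cast; rfl
    calc dist (((y:ℝ)) : AddCircle (1:ℝ)) (((α * (x + n) : ℝ)) : AddCircle (1:ℝ))
        = ‖((y - α * (x + n) - m : ℝ) : AddCircle (1:ℝ))‖ := by
          rw [dist_eq_norm, heq]
      _ ≤ |y - α * (x + n) - m| := by
          simpa [Real.norm_eq_abs] using QuotientAddGroup.norm_mk_le_norm (S := AddSubgroup.zmultiples (1:ℝ)) (m := y - α * (x + n) - m)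
      _ < r := by
          rw [Real.dist_eq] at hs2
          rw [← hmn] at hs2
          convert hs2 using 2
          ring
  rw [Prod.dist_eq]
  apply max_lt
  · simpa [torusFlow, hfst] using hr
  · exact hsnd

lemma torusFlow_add (α s t : ℝ) : torusFlow α (s + t) = torusFlow α s + torusFlow α t := by
  unfold torusFlow
  rw [Prod.mk_add_mk, mul_add, AddCircle.coe_add, AddCircle.coe_add]

lemma torusFlow_neg (α t : ℝ) : torusFlow α (-t) = -torusFlow α t := by
  unfold torusFlow
  rw [Prod.neg_mk, mul_neg, AddCircle.coe_neg, AddCircle.coe_neg]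

lemma eq_of_dist_flow_eq (α : ℝ) (hα : Irrational α) {w w' : T2}
    (h : ∀ s : ℝ, dist w (torusFlow α s) = dist w' (torusFlow α s)) : w = w' := by
  have hd := denseRange_torusFlow α hα
  have heq : (fun z : T2 => dist w z) = fun z : T2 => dist w' z :=
    hd.equalizer (continuous_const.dist continuous_id)
      (continuous_const.dist continuous_id) (funext h)
  have h2 := congrFun heq w'
  simp only [dist_self] at h2
  exact dist_eq_zero.mp h2

lemma inr_mem_torusX (α : ℝ) {p : T2 × ℝ} (h : Sum.inr p ∈ torusX α) :
    p = (torusFlow α p.2, p.2) := by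
  rcases h with ⟨y, hy⟩ | ⟨t, ht⟩
  · simp at hy
  · obtain rfl : p = (torusFlow α t, t) := Sum.inr.inj ht
    rfl

noncomputable def phimap (α : ℝ) (gR : ℝ → ℝ) (σ : T2 → T2) :
    T2 ⊕ T2 × ℝ → T2 ⊕ T2 × ℝ
  | Sum.inl y => Sum.inl (σ y)
  | Sum.inr p => Sum.inr (torusFlow α (gR p.2), gR p.2)

lemma phimap_mem (α : ℝ) (gR : ℝ → ℝ) (σ : T2 → T2) (z : T2 ⊕ T2 × ℝ) :
    phimap α gR σ z ∈ torusX α := by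
  cases z with
  | inl y => exact memT α (σ y)
  | inr p => exact memH α (gR p.2)

lemma exists_unique_aux (α : ℝ) (hα : Irrational α)
    (R M : ℝ) (hM : 0 < M) (hRM : M ≤ 2 * R)
    (gR : ℝ → ℝ) (hgRsurj : Function.Surjective gR)
    (hgRiso : ∀ s t : ℝ, dist (gR s) (gR t) = dist s t)
    (σ : T2 → T2) (hσsurj : Function.Surjective σ)
    (hσiso : ∀ y₁ y₂ : T2, dist (σ y₁) (σ y₂) = dist y₁ y₂)
    (hσflow : ∀ t : ℝ, σ (torusFlow α t) = torusFlow α (gR t)) :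
    ∃! φ : torusX α → torusX α,
      Function.Surjective φ ∧
      (∀ p q : torusX α, zdist R M (φ p).1 (φ q).1 = zdist R M p.1 q.1) ∧
      (∀ t : ℝ, (φ ⟨Sum.inr (torusFlow α t, t), memH α t⟩).1 =
          Sum.inr (torusFlow α (gR t), gR t)) := by
  have hR : 0 < R := by linarith
  have habs : ∀ s t : ℝ, |gR s - gR t| = |s - t| := by
    intro s t; have := hgRiso s t; rwa [Real.dist_eq, Real.dist_eq] at this
  refine ⟨fun x => ⟨phimap α gR σ x.1, phimap_mem α gR σ x.1⟩, ⟨?_, ?_, ?_⟩, ?_⟩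
  · -- surjectivity
    rintro ⟨z, hz⟩
    cases z with
    | inl y =>
      obtain ⟨w, hw⟩ := hσsurj y
      exact ⟨⟨Sum.inl w, memT α w⟩, Subtype.ext (by simp [phimap, hw])⟩
    | inr p =>
      have hp := inr_mem_torusX α hz
      obtain ⟨s, hs⟩ := hgRsurj p.2
      refine ⟨⟨Sum.inr (torusFlow α s, s), memH α s⟩, Subtype.ext ?_⟩
      show Sum.inr (torusFlow α (gR s), gR s) = Sum.inr p
      rw [hs, ← hp]
  · -- isometry
    rintro ⟨z₁, h₁⟩ ⟨z₂, h₂⟩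
    cases z₁ with
    | inl y₁ =>
      cases z₂ with
      | inl y₂ => simp [phimap, zdist, hσiso]
      | inr q =>
        have hq := inr_mem_torusX α h₂
        have hq1 : q.1 = torusFlow α q.2 := congrArg Prod.fst hq
        simp only [phimap, zdist]
        rw [← hσflow, hσiso, hq1]
    | inr p =>
      have hp := inr_mem_torusX α h₁
      have hp1 : p.1 = torusFlow α p.2 := congrArg Prod.fst hp
      cases z₂ with
      | inl y₂ =>
        simp only [phimap, zdist]
        rw [← hσflow, hσiso, hp1]
      | inr q =>
        have hq := inr_mem_torusX α h₂
        have hq1 : q.1 = torusFlow α q.2 := congrArg Prod.fst hq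
        simp only [phimap, zdist]
        rw [← hσflow, ← hσflow, hσiso, hp1, hq1, habs]
  · -- flow condition
    intro t
    rfl
  · -- uniqueness
    rintro ψ ⟨hψsurj, hψiso, hψflow⟩
    funext x
    apply Subtype.ext
    obtain ⟨z, hz⟩ := x
    cases z with
    | inr p =>
      have hp := inr_mem_torusX α hz
      have hx : (⟨Sum.inr p, hz⟩ : torusX α)
          = ⟨Sum.inr (torusFlow α p.2, p.2), memH α p.2⟩ := Subtype.ext (congrArg Sum.inr hp)
      rw [hx, hψflow p.2]
      rfl
    | inl y =>
      -- ψ sends inl y to some inl w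
      show (ψ ⟨Sum.inl y, hz⟩).1 = Sum.inl (σ y)
      have hmem := (ψ ⟨Sum.inl y, hz⟩).2
      rcases hw : (ψ ⟨Sum.inl y, hz⟩).1 with w | q
      · -- main case: compare distances to all H points
        congr 1
        have key : ∀ t : ℝ, dist w (torusFlow α (gR t)) = dist y (torusFlow α t) := by
          intro t
          have h := hψiso ⟨Sum.inl y, hz⟩ ⟨Sum.inr (torusFlow α t, t), memH α t⟩
          rw [hψflow t, hw] at h
          simp only [zdist] at h
          linarith
        have key2 : ∀ s : ℝ, dist w (torusFlow α s) = dist (σ y) (torusFlow α s) := by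
          intro s
          obtain ⟨t, rfl⟩ := hgRsurj s
          rw [key t, ← hσflow, hσiso]
        exact eq_of_dist_flow_eq α hα key2
      · -- impossible: image of a torus point cannot be an H point
        exfalso
        rw [hw] at hmem
        have hq := inr_mem_torusX α hmem
        have hq1 : q.1 = torusFlow α q.2 := congrArg Prod.fst hq
        obtain ⟨t, ht⟩ := hgRsurj q.2
        have h := hψiso ⟨Sum.inl y, hz⟩ ⟨Sum.inr (torusFlow α t, t), memH α t⟩
        rw [hψflow t, hw] at h
        simp only [zdist] at h
        rw [ht, hq1] at h
        simp only [dist_self, sub_self, abs_zero, zero_add] at h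
        have h0 : min (0:ℝ) M = 0 := min_eq_left hM.le
        rw [h0] at h
        have := dist_nonneg (x := y) (y := torusFlow α t)
        linarith

/-- in the torus example `X = 𝕋 ∪ H`, for every surjective isometry
`g_ℝ` of the Euclidean line there is exactly one surjective isometry `φ` of
`(X, d)` such that `φ(g(t), t) = (g(g_ℝ(t)), g_ℝ(t))` for every `t ∈ ℝ`
(equivalently, `φ(g(t), t) ∈ 𝕋 × {g_ℝ(t)}`). -/
theorem torus_isometry_existsUnique_over_line (α : ℝ) (hα : Irrational α)
    (R M : ℝ) (hM : 0 < M) (hRM : M ≤ 2 * R)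
    (gR : ℝ → ℝ) (hgRsurj : Function.Surjective gR)
    (hgRiso : ∀ s t : ℝ, dist (gR s) (gR t) = dist s t) :
    ∃! φ : torusX α → torusX α,
      Function.Surjective φ ∧
      (∀ p q : torusX α, zdist R M (φ p).1 (φ q).1 = zdist R M p.1 q.1) ∧
      (∀ t : ℝ, (φ ⟨Sum.inr (torusFlow α t, t), memH α t⟩).1 =
          Sum.inr (torusFlow α (gR t), gR t)) := by
  set c := gR 0 with hc
  have habs : ∀ s t : ℝ, |gR s - gR t| = |s - t| := by
    intro s t; have := hgRiso s t; rwa [Real.dist_eq, Real.dist_eq] at this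
  have hsq : ∀ s t : ℝ, (gR s - c) * (gR t - c) = s * t := by
    intro s t
    have h1 : (gR s - gR t) ^ 2 = (s - t) ^ 2 := by rw [← sq_abs, habs, sq_abs]
    have h2 : (gR s - c) ^ 2 = s ^ 2 := by
      have := habs s 0; rw [← hc] at this
      rw [← sq_abs, this, sub_zero, sq_abs]
    have h3 : (gR t - c) ^ 2 = t ^ 2 := by
      have := habs t 0; rw [← hc] at this
      rw [← sq_abs, this, sub_zero, sq_abs]
    nlinarith [h1, h2, h3]
  set ε := gR 1 - c with hε'
  have hε : ε * ε = 1 := by simpa using hsq 1 1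
  have hlin : ∀ t : ℝ, gR t = c + ε * t := by
    intro t
    have h := hsq t 1
    rw [mul_one] at h
    linear_combination ε * h - (gR t - c) * hε
  rcases mul_self_eq_one_iff.mp hε with h1 | h1
  · refine exists_unique_aux α hα R M hM hRM gR hgRsurj hgRiso
      (fun y => torusFlow α c + y) ?_ ?_ ?_
    · exact fun y => ⟨y - torusFlow α c, by simp⟩
    · intro y₁ y₂; exact dist_add_left _ _ _
    · intro t
      show torusFlow α c + torusFlow α t = torusFlow α (gR t)
      rw [← torusFlow_add, hlin t, h1, one_mul]
  · refine exists_unique_aux α hα R M hM hRM gR hgRsurj hgRiso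
      (fun y => torusFlow α c - y) ?_ ?_ ?_
    · exact fun y => ⟨torusFlow α c - y, by simp⟩
    · intro y₁ y₂; exact dist_sub_left _ _ _
    · intro t
      show torusFlow α c - torusFlow α t = torusFlow α (gR t)
      rw [sub_eq_add_neg, ← torusFlow_neg, ← torusFlow_add, hlin t, h1]
      ring_nf
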